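/- Let a > 0, b > 0, and let f₁(z) = ∑_{k=1}^∞ z^k/(k+a)^b for |z| < 1. Then for all z with |z| < 1, f₁(z) = (z/Γ(b)) ∫₀^∞ [ln(1+t)]^{b-1} / ((1+t)^{a+1} (t - (z-1))) dt. -/

import Mathlib

open MeasureTheory Set Real

private lemma gamma_aux {b c : ℝ} (hb : 0 < b) (hc : 0 < c) :
    IntegrableOn (fun u : ℝ => u ^ (b - 1) * Real.exp (-(c * u))) (Ioi 0) := by
  have := integrableOn_rpow_mul_exp_neg_mul_rpow (p := 1) (s := b - 1) (b := c)
    (by linarith) one_pos hc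
  simpa [Real.rpow_one, neg_mul] using this

private lemma gamma_val {b c : ℝ} (hb : 0 < b) (hc : 0 < c) :
    ∫ u in Ioi (0:ℝ), ((u ^ (b - 1) * Real.exp (-(c * u)) : ℝ) : ℂ) =
      (((1 / c) ^ b * Real.Gamma b : ℝ) : ℂ) := by
  have h := integral_ofReal (𝕜 := ℂ) (f := fun u : ℝ => u ^ (b - 1) * Real.exp (-(c * u)))
    (μ := volume.restrict (Ioi 0))
  exact h.trans (by rw [integral_rpow_mul_exp_neg_mul_Ioi hb hc]; rfl)

theorem stmt1 (a b : ℝ) (ha : 0 < a) (hb : 0 < b) (z : ℂ) (hz : ‖z‖ < 1) :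
    ∑' k : ℕ, z ^ (k + 1) / ((((k : ℝ) + 1 + a) ^ b : ℝ) : ℂ) =
      z / (Real.Gamma b : ℂ) *
        ∫ t in Ioi (0 : ℝ),
          ((Real.log (1 + t) ^ (b - 1) / (1 + t) ^ (a + 1) : ℝ) : ℂ) /
            ((t : ℂ) - (z - 1)) := by
  have hΓ : 0 < Real.Gamma b := Real.Gamma_pos_of_pos hb
  set g : ℝ → ℂ := fun t =>
    ((Real.log (1 + t) ^ (b - 1) / (1 + t) ^ (a + 1) : ℝ) : ℂ) / ((t : ℂ) - (z - 1)) with hgdef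
  -- Step 1: change of variables t = exp u - 1
  have himg : (fun u : ℝ => Real.exp u - 1) '' Ioi 0 = Ioi 0 := by
    ext t
    constructor
    · rintro ⟨u, hu, rfl⟩
      have : 1 < Real.exp u := Real.one_lt_exp_iff.mpr hu
      simpa using this
    · intro ht
      refine ⟨Real.log (1 + t), ?_, ?_⟩
      · have : (1:ℝ) < 1 + t := by linarith [mem_Ioi.mp ht]
        simpa using Real.log_pos this
      · show Real.exp (Real.log (1 + t)) - 1 = t
        rw [Real.exp_log (by linarith [mem_Ioi.mp ht])]; ring
  have hinj : InjOn (fun u : ℝ => Real.exp u - 1) (Ioi 0) := fun x _ y _ h =>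
    Real.exp_injective (by linarith [sub_left_injective.eq_iff.mp h] : Real.exp x = Real.exp y)
  have hderiv : ∀ x ∈ Ioi (0:ℝ),
      HasDerivWithinAt (fun u : ℝ => Real.exp u - 1) (Real.exp x) (Ioi 0) x :=
    fun x _ => ((Real.hasDerivAt_exp x).sub_const 1).hasDerivWithinAt
  have hCoV : ∫ t in Ioi (0:ℝ), g t =
      ∫ u in Ioi (0:ℝ), ((u ^ (b - 1) * Real.exp (-(a * u)) : ℝ) : ℂ) / ((Real.exp u : ℂ) - z) := by
    conv_lhs => rw [← himg]
    rw [integral_image_eq_integral_abs_deriv_smul measurableSet_Ioi hderiv hinj g]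
    refine setIntegral_congr_fun measurableSet_Ioi (fun u hu => ?_)
    have hu0 : (0:ℝ) < u := mem_Ioi.mp hu
    have h1 : 1 + (Real.exp u - 1) = Real.exp u := by ring
    have h2 : Real.log (Real.exp u) = u := Real.log_exp u
    have h3 : Real.exp u ^ (a + 1) = Real.exp (u * (a + 1)) := by
      rw [Real.rpow_def_of_pos (Real.exp_pos u), Real.log_exp]
    have h4 : |Real.exp u| = Real.exp u := abs_of_pos (Real.exp_pos u)
    have h5 : ((Real.exp u - 1 : ℝ) : ℂ) - (z - 1) = (Real.exp u : ℂ) - z := by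
      push_cast; ring
    simp only [hgdef, h1, h2, h3, h4, h5, Complex.real_smul]
    rw [div_eq_mul_inv, div_eq_mul_inv, ← mul_assoc]
    congr 1
    have : Real.exp u * (u ^ (b - 1) / Real.exp (u * (a + 1))) =
        u ^ (b - 1) * Real.exp (-(a * u)) := by
      calc Real.exp u * (u ^ (b - 1) / Real.exp (u * (a + 1)))
          = u ^ (b - 1) * (Real.exp u / Real.exp (u * (a + 1))) := by ring
        _ = u ^ (b - 1) * Real.exp (u - u * (a + 1)) := by rw [Real.exp_sub]
        _ = u ^ (b - 1) * Real.exp (-(a * u)) := by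
            rw [show u - u * (a + 1) = -(a * u) by ring]
    push_cast [← this]
    ring
  -- Step 2: geometric series expansion, pointwise
  set F : ℕ → ℝ → ℂ := fun k u =>
    z ^ k * ((u ^ (b - 1) * Real.exp (-((((k:ℕ):ℝ) + 1 + a) * u)) : ℝ) : ℂ) with hFdef
  have hseries : ∀ u ∈ Ioi (0:ℝ),
      ((u ^ (b - 1) * Real.exp (-(a * u)) : ℝ) : ℂ) / ((Real.exp u : ℂ) - z) =
        ∑' k : ℕ, F k u := by
    intro u hu
    have hu0 : (0:ℝ) < u := mem_Ioi.mp hu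
    have hr : ‖z * (Real.exp (-u) : ℂ)‖ < 1 := by
      rw [norm_mul, Complex.norm_real, Real.norm_eq_abs, abs_of_pos (Real.exp_pos _)]
      have h1 : Real.exp (-u) ≤ 1 := Real.exp_le_one_iff.mpr (by linarith)
      calc ‖z‖ * Real.exp (-u) ≤ ‖z‖ * 1 :=
            mul_le_mul_of_nonneg_left h1 (norm_nonneg z)
        _ < 1 := by simpa using hz
    have hterm : ∀ k : ℕ, F k u =
        (z * (Real.exp (-u) : ℂ)) ^ k *
          ((u ^ (b - 1) * Real.exp (-((1 + a) * u)) : ℝ) : ℂ) := by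
      intro k
      have : Real.exp (-((((k:ℕ):ℝ) + 1 + a) * u)) =
          Real.exp (-u) ^ k * Real.exp (-((1 + a) * u)) := by
        rw [← Real.exp_nat_mul, ← Real.exp_add]
        congr 1
        ring
      rw [hFdef]
      push_cast [this]
      ring
    rw [tsum_congr hterm, tsum_mul_right, tsum_geometric_of_norm_lt_one hr]
    have hE : (Real.exp u : ℂ) ≠ 0 := by
      simp [Real.exp_ne_zero]
    have hEgt : (1:ℝ) < Real.exp u := Real.one_lt_exp_iff.mpr hu0
    have hEz : (Real.exp u : ℂ) - z ≠ 0 := by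
      rw [sub_ne_zero]
      intro h
      rw [← h, Complex.norm_real, Real.norm_eq_abs, abs_of_pos (Real.exp_pos _)] at hz
      linarith
    have hne : 1 - z * (Real.exp (-u) : ℂ) ≠ 0 := by
      intro h
      have h2 : z * (Real.exp (-u) : ℂ) = 1 := (sub_eq_zero.mp h).symm
      rw [h2] at hr
      simp at hr
    have hexp : ((Real.exp (-u) : ℝ) : ℂ) = ((Real.exp u : ℝ) : ℂ)⁻¹ := by
      rw [Real.exp_neg]; push_cast; ring
    have hsplit : ((Real.exp (-((1 + a) * u)) : ℝ) : ℂ) =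
        ((Real.exp (-(a * u)) : ℝ) : ℂ) * ((Real.exp u : ℝ) : ℂ)⁻¹ := by
      rw [show -((1 + a) * u) = -(a * u) + -u by ring, Real.exp_add, Real.exp_neg]
      push_cast [Complex.exp_neg]
      ring
    rw [hexp] at hne ⊢
    push_cast at hEz hne ⊢
    push_cast [hsplit, Complex.exp_neg]
    field_simp [Complex.exp_ne_zero, hEz, hne]
    rw [show (u : ℂ) * ((1 : ℂ) + (a : ℂ)) = (a : ℂ) * (u : ℂ) + (u : ℂ) by ring,
      Complex.exp_add]
    ring
  -- Step 3: swap sum and integral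
  have hcpos : ∀ k : ℕ, (0:ℝ) < ((k:ℕ):ℝ) + 1 + a := fun k => by positivity
  have hintR : ∀ k : ℕ, IntegrableOn
      (fun u : ℝ => u ^ (b - 1) * Real.exp (-((((k:ℕ):ℝ) + 1 + a) * u))) (Ioi 0) :=
    fun k => gamma_aux hb (hcpos k)
  have hintF : ∀ k : ℕ, Integrable (F k) (volume.restrict (Ioi 0)) :=
    fun k => ((hintR k).ofReal (𝕜 := ℂ)).const_mul _
  set M : ℝ := (1 / a) ^ b * Real.Gamma b with hM
  have hnormint : ∀ k : ℕ, ∫ u in Ioi (0:ℝ), ‖F k u‖ =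
      ‖z‖ ^ k * ((1 / (((k:ℕ):ℝ) + 1 + a)) ^ b * Real.Gamma b) := by
    intro k
    have : ∀ u ∈ Ioi (0:ℝ), ‖F k u‖ =
        ‖z‖ ^ k * (u ^ (b - 1) * Real.exp (-((((k:ℕ):ℝ) + 1 + a) * u))) := by
      intro u hu
      have hu0 : (0:ℝ) < u := mem_Ioi.mp hu
      rw [hFdef]
      rw [norm_mul, norm_pow, Complex.norm_real, Real.norm_eq_abs,
        abs_of_nonneg (by positivity)]
    rw [setIntegral_congr_fun measurableSet_Ioi this, integral_const_mul]
    congr 1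
    exact integral_rpow_mul_exp_neg_mul_Ioi hb (hcpos k)
  have hbound : ∀ k : ℕ, ∫ u in Ioi (0:ℝ), ‖F k u‖ ≤ ‖z‖ ^ k * M := by
    intro k
    rw [hnormint k, hM]
    apply mul_le_mul_of_nonneg_left _ (by positivity)
    apply mul_le_mul_of_nonneg_right _ hΓ.le
    apply Real.rpow_le_rpow (by positivity) _ hb.le
    apply one_div_le_one_div_of_le ha
    linarith [Nat.cast_nonneg (α := ℝ) k]
  have hMsum : Summable (fun k : ℕ => ‖z‖ ^ k * M) :=
    (summable_geometric_of_lt_one (norm_nonneg z) hz).mul_right M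
  have hf' : ∑' k : ℕ, ∫⁻ u in Ioi (0:ℝ), ‖F k u‖₊ ≠ ⊤ := by
    have hle : ∀ k : ℕ, ∫⁻ u in Ioi (0:ℝ), ‖F k u‖₊ ≤ ENNReal.ofReal (‖z‖ ^ k * M) := by
      intro k
      simp_rw [← enorm_eq_nnnorm]
      rw [← ofReal_integral_norm_eq_lintegral_enorm (hintF k)]
      exact ENNReal.ofReal_le_ofReal (hbound k)
    have hfin : ∑' k : ℕ, ENNReal.ofReal (‖z‖ ^ k * M) ≠ ⊤ := by
      rw [← ENNReal.ofReal_tsum_of_nonneg (fun k => by positivity) hMsum]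
      exact ENNReal.ofReal_ne_top
    exact ne_top_of_le_ne_top hfin (ENNReal.tsum_le_tsum hle)
  have hswap : ∫ u in Ioi (0:ℝ), ∑' k : ℕ, F k u = ∑' k : ℕ, ∫ u in Ioi (0:ℝ), F k u :=
    integral_tsum (fun k => (hintF k).aestronglyMeasurable) hf'
  have hvalF : ∀ k : ℕ, ∫ u in Ioi (0:ℝ), F k u =
      z ^ k * (((1 / (((k:ℕ):ℝ) + 1 + a)) ^ b * Real.Gamma b : ℝ) : ℂ) := by
    intro k
    rw [hFdef]
    simp only
    rw [integral_const_mul, gamma_val hb (hcpos k)]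
  -- put everything together
  rw [hCoV, setIntegral_congr_fun measurableSet_Ioi hseries, hswap, tsum_congr hvalF,
    ← tsum_mul_left]
  refine tsum_congr (fun k => ?_)
  have hc : (0:ℝ) < ((k:ℕ):ℝ) + 1 + a := hcpos k
  have hΓ' : (Real.Gamma b : ℂ) ≠ 0 := by exact_mod_cast hΓ.ne'
  have hcb : ((((k:ℕ):ℝ) + 1 + a) ^ b : ℝ) ≠ 0 := by positivity
  have hcb' : (((((k:ℕ):ℝ) + 1 + a) ^ b : ℝ) : ℂ) ≠ 0 := by exact_mod_cast hcb
  have hone : (1 / (((k:ℕ):ℝ) + 1 + a)) ^ b = ((((k:ℕ):ℝ) + 1 + a) ^ b)⁻¹ := by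
    rw [one_div, Real.inv_rpow hc.le]
  rw [hone]
  push_cast
  field_simp
  ring
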